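/- Let x, y ∈ ℝ^m, let B, B̃ ∈ ℝ^{m×s} with ‖B̃ - B‖_{1,2} ≤ ε̄, and let f satisfy the standard assumption. Then ‖R_{B̃}^f(x) - R_{B̃}^f(y)‖₂ ≥ √2 (σ([B, x, y]) - √s · ε̄). -/

import Mathlib

noncomputable section

open scoped BigOperators

abbrev E (m : ℕ) := EuclideanSpace ℝ (Fin m)

def toE {m : ℕ} (x : Fin m → ℝ) : E m := WithLp.toLp 2 x

/-- The unit simplex `Δ = {y | y ≥ 0, ∑ y ≤ 1}`. -/
def simplex (n : Type*) [Fintype n] : Set (n → ℝ) :=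
  {y | (∀ i, 0 ≤ y i) ∧ ∑ i, y i ≤ 1}

/-- Assumption 2 of the paper: `f` is `μ`-strongly convex with `L`-Lipschitz
gradient `f'`, and `0` is its global minimizer with `f 0 = 0`. -/
structure GoodF {m : ℕ} (f : E m → ℝ) (f' : E m → E m) (μ L : ℝ) : Prop where
  mu_pos : 0 < μ
  grad : ∀ x, HasGradientAt f (f' x) x
  lip : ∀ x y : E m, ‖f' x - f' y‖ ≤ L * ‖x - y‖
  sconv : ∀ x y : E m, ∀ δ : ℝ, 0 ≤ δ → δ ≤ 1 →
    f (δ • x + (1 - δ) • y) ≤ δ * f x + (1 - δ) * f y - μ / 2 * δ * (1 - δ) * ‖x - y‖ ^ 2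
  f_zero : f 0 = 0
  min_zero : ∀ x, f 0 ≤ f x

/-- A minimizer over the unit simplex of `y ↦ f (x - B y)` (chosen via choice). -/
def argminSimplex {m : ℕ} {n : Type*} [Fintype n] (f : E m → ℝ)
    (B : Matrix (Fin m) n ℝ) (x : E m) : n → ℝ :=
  Classical.epsilon fun y => y ∈ simplex n ∧
    ∀ z ∈ simplex n, f (x - toE (B.mulVec y)) ≤ f (x - toE (B.mulVec z))

/-- The residual `R_B^f(x) = x - B y*` where `y* = argmin_{y ∈ Δ} f (x - B y)`. -/
def resid {m : ℕ} {n : Type*} [Fintype n] (f : E m → ℝ)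
    (B : Matrix (Fin m) n ℝ) (x : E m) : E m :=
  x - toE (B.mulVec (argminSimplex f B x))

/-- Column-wise residual matrix `R_B^f(A)`. -/
def residMat {m : ℕ} {n k : Type*} [Fintype n] (f : E m → ℝ)
    (B : Matrix (Fin m) n ℝ) (A : Matrix (Fin m) k ℝ) : Matrix (Fin m) k ℝ :=
  fun i j => resid f B (toE fun i' => A i' j) i

/-- `‖N‖_{1,2}`: the maximum `ℓ₂` column norm. -/
def norm12 {m : ℕ} {n : Type*} [Fintype n] (N : Matrix (Fin m) n ℝ) : ℝ :=
  sSup {c | ∃ j, c = ‖toE fun i => N i j‖}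

/-- `α(W)`: minimum distance between a column of `W` and the convex hull of the
other columns of `W` and the origin. -/
def alpha {m r : ℕ} (W : Matrix (Fin m) (Fin r) ℝ) : ℝ :=
  sInf {c | ∃ (j : Fin r) (x : Fin r → ℝ), x ∈ simplex (Fin r) ∧ x j = 0 ∧
    c = ‖toE (fun i => W i j) - toE (W.mulVec x)‖}

/-- `σ(W)`: smallest singular value (`min_{‖z‖₂ ≥ 1} ‖Wz‖₂`) if `m ≥ r`, and `0` if `m < r`. -/
def smin {m r : ℕ} (W : Matrix (Fin m) (Fin r) ℝ) : ℝ :=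
  if r ≤ m then sInf {c | ∃ z : Fin r → ℝ, 1 ≤ ‖toE z‖ ∧ c = ‖toE (W.mulVec z)‖} else 0

/-- `[B, x]`: append the column `x` to `B`. -/
def appendCol {m s : ℕ} (B : Matrix (Fin m) (Fin s) ℝ) (x : E m) :
    Matrix (Fin m) (Fin (s + 1)) ℝ :=
  fun i => Fin.snoc (fun j => B i j) (x i)

/-- `[A, B]`: horizontal concatenation. -/
def appendMat {m k s : ℕ} (A : Matrix (Fin m) (Fin k) ℝ) (B : Matrix (Fin m) (Fin s) ℝ) :
    Matrix (Fin m) (Fin (k + s)) ℝ :=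
  fun i => Fin.append (fun j => A i j) (fun j => B i j)

/-- `ω(P) = min (min_i ‖p_i‖₂, (1/√2) min_{i ≠ j} ‖p_i - p_j‖₂)`. -/
def omegaM {m : ℕ} {k : Type*} [Fintype k] (P : Matrix (Fin m) k ℝ) : ℝ :=
  sInf ({c | ∃ i, c = ‖toE fun a => P a i‖} ∪
    {c | ∃ i j, i ≠ j ∧ c = (Real.sqrt 2)⁻¹ * ‖(toE fun a => P a i) - toE fun a => P a j‖})

/-- `β(W) = min (ν_β(W), γ_β(W)/√2)` as in the paper. -/
def beta {m r : ℕ} (f : E m → ℝ) (W : Matrix (Fin m) (Fin r) ℝ) : ℝ :=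
  sInf ({c | ∃ j : Fin r,
      c = ‖resid f (W.submatrix id fun p : {i // i ≠ j} => (p : Fin r)) (toE fun a => W a j)‖} ∪
    {c | ∃ (i j : Fin r) (J : Finset (Fin r)), i ≠ j ∧ i ∉ J ∧ j ∉ J ∧
      c = (Real.sqrt 2)⁻¹ *
        ‖resid f (W.submatrix id fun p : J => (p : Fin r)) (toE fun a => W a i) -
         resid f (W.submatrix id fun p : J => (p : Fin r)) (toE fun a => W a j)‖})

theorem Matrix.isHermitian_transpose_mul_self {m n : Type*} [Fintype m]
    (A : Matrix m n ℝ) : (A.transpose * A).IsHermitian := by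
  simpa using Matrix.isHermitian_conjTranspose_mul_self A

/-- Singular values of `B` in nonincreasing order (`i`-th largest at index `i`). -/
def singVals {m s : ℕ} (B : Matrix (Fin m) (Fin s) ℝ) : Fin s → ℝ := fun i =>
  Real.sqrt (((Matrix.isHermitian_transpose_mul_self B).eigenvalues ∘
    Tuple.sort (Matrix.isHermitian_transpose_mul_self B).eigenvalues) i.rev)

/-- The spectral norm `‖N‖₂` (ℓ₂ operator norm). -/
def spec {m s : ℕ} (N : Matrix (Fin m) (Fin s) ℝ) : ℝ :=
  ‖LinearMap.toContinuousLinearMap (Matrix.toEuclideanLin N)‖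

-- aux lemmas
lemma toE_mulVec_eq_sum {m s : ℕ} (M : Matrix (Fin m) (Fin s) ℝ) (w : Fin s → ℝ) :
    toE (M.mulVec w) = ∑ j, w j • (toE fun i => M i j) := by
  ext i
  calc M.mulVec w i = ∑ j, w j * M i j := by
        simp [Matrix.mulVec, dotProduct, mul_comm]
    _ = (EuclideanSpace.proj (𝕜 := ℝ) i) (∑ j, w j • toE fun i => M i j) := by
        rw [map_sum]; simp [toE]
    _ = (∑ j, w j • toE fun i => M i j) i := rfl

lemma norm_toE_mulVec_le {m s : ℕ} (M : Matrix (Fin m) (Fin s) ℝ) (w : Fin s → ℝ) :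
    ‖toE (M.mulVec w)‖ ≤ ∑ j, |w j| * ‖toE fun i => M i j‖ := by
  rw [toE_mulVec_eq_sum]
  refine (norm_sum_le _ _).trans (le_of_eq ?_)
  refine Finset.sum_congr rfl fun j _ => ?_
  rw [norm_smul, Real.norm_eq_abs]

lemma simplex_compact (n : Type*) [Fintype n] : IsCompact (simplex n) := by
  have hsub : simplex n ⊆ Set.pi Set.univ (fun _ : n => Set.Icc (0:ℝ) 1) := by
    rintro y ⟨h1, h2⟩ i -
    refine ⟨h1 i, ?_⟩
    calc y i ≤ ∑ j, y j := Finset.single_le_sum (f := y) (fun j _ => h1 j) (Finset.mem_univ i)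
      _ ≤ 1 := h2
  have hclosed : IsClosed (simplex n) := by
    have : simplex n = (⋂ i, {y : n → ℝ | 0 ≤ y i}) ∩ {y | ∑ i, y i ≤ 1} := by
      ext y; simp [simplex, Set.mem_iInter]
    rw [this]
    exact (isClosed_iInter fun i =>
        isClosed_le continuous_const (continuous_apply i)).inter
      (isClosed_le (by continuity) continuous_const)
  exact (isCompact_univ_pi fun _ => isCompact_Icc).of_isClosed_subset hclosed hsub

lemma argminSimplex_mem {m : ℕ} {n : Type*} [Fintype n] (f : E m → ℝ) (hf : Continuous f)
    (B : Matrix (Fin m) n ℝ) (x : E m) : argminSimplex f B x ∈ simplex n := by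
  have hL : Continuous fun y : n → ℝ => f (x - toE (B.mulVec y)) := by
    have h1 : Continuous fun y : n → ℝ => toE (B.mulVec y) := by
      let L : (n → ℝ) →ₗ[ℝ] E m :=
        { toFun := fun y => toE (B.mulVec y)
          map_add' := fun a b => by simp [toE, Matrix.mulVec_add]
          map_smul' := fun c a => by simp [toE, Matrix.mulVec_smul] }
      exact L.continuous_of_finiteDimensional
    exact hf.comp (continuous_const.sub h1)
  have hne : (simplex n).Nonempty := ⟨0, fun i => le_refl 0, by simp⟩
  obtain ⟨y, hy, hmin⟩ := (simplex_compact n).exists_isMinOn hne hL.continuousOn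
  have hex : ∃ y, y ∈ simplex n ∧
      ∀ z ∈ simplex n, f (x - toE (B.mulVec y)) ≤ f (x - toE (B.mulVec z)) :=
    ⟨y, hy, fun z hz => hmin hz⟩
  exact (Classical.epsilon_spec hex).1

lemma mulVec_appendCol {m s : ℕ} (B : Matrix (Fin m) (Fin s) ℝ) (u : E m)
    (w : Fin s → ℝ) (a : ℝ) :
    (appendCol B u).mulVec (Fin.snoc w a) = fun i => B.mulVec w i + a * u i := by
  funext i
  simp [appendCol, Matrix.mulVec, dotProduct, Fin.sum_univ_castSucc, mul_comm]

theorem stmt10 (m s : ℕ) (μ L : ℝ) (f : E m → ℝ) (f' : E m → E m) (hf : GoodF f f' μ L)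
    (B Bt : Matrix (Fin m) (Fin s) ℝ) (eps : ℝ) (hN : norm12 (Bt - B) ≤ eps)
    (x y : E m) :
    Real.sqrt 2 * (smin (appendCol (appendCol B x) y) - Real.sqrt (s : ℝ) * eps) ≤
      ‖resid f Bt x - resid f Bt y‖ := by
  have hs2 : (0:ℝ) < Real.sqrt 2 := by positivity
  set c : ℝ := (Real.sqrt 2)⁻¹ with hcdef
  have hcpos : 0 < c := by positivity
  have hc2 : c ^ 2 = 1 / 2 := by
    rw [hcdef, inv_pow, Real.sq_sqrt (by norm_num : (0:ℝ) ≤ 2)]; norm_num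
  set D := ‖resid f Bt x - resid f Bt y‖ with hDdef
  have hD0 : 0 ≤ D := norm_nonneg _
  -- continuity of f
  have hcont : Continuous f := by
    have : Differentiable ℝ f := fun z => (hf.grad z).hasFDerivAt.differentiableAt
    exact this.continuous
  set zx := argminSimplex f Bt x with hzx
  set zy := argminSimplex f Bt y with hzy
  have hzxm := argminSimplex_mem f hcont Bt x
  have hzym := argminSimplex_mem f hcont Bt y
  rw [← hzx] at hzxm; rw [← hzy] at hzym
  -- coordinates of simplex elements are in [0,1]
  have hcoord : ∀ z : Fin s → ℝ, z ∈ simplex (Fin s) → ∀ j, 0 ≤ z j ∧ z j ≤ 1 := by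
    rintro z ⟨h1, h2⟩ j
    exact ⟨h1 j, le_trans (Finset.single_le_sum (f := z) (fun i _ => h1 i)
      (Finset.mem_univ j)) h2⟩
  set z' : Fin s → ℝ := fun j => zy j - zx j with hz'def
  -- sum of squares bound
  have hsq : ∑ j, z' j ^ 2 ≤ 2 := by
    have hterm : ∀ j, z' j ^ 2 ≤ zx j + zy j := by
      intro j
      obtain ⟨ha, hb⟩ := hcoord zx hzxm j
      obtain ⟨hc', hd⟩ := hcoord zy hzym j
      simp only [hz'def]
      nlinarith
    calc ∑ j, z' j ^ 2 ≤ ∑ j, (zx j + zy j) := Finset.sum_le_sum fun j _ => hterm j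
      _ = (∑ j, zx j) + ∑ j, zy j := Finset.sum_add_distrib
      _ ≤ 1 + 1 := add_le_add hzxm.2 hzym.2
      _ = 2 := by norm_num
  -- l1 bound
  have hl1 : ∑ j, |z' j| ≤ Real.sqrt 2 * Real.sqrt s := by
    have h1 : (∑ j, |z' j|) ^ 2 ≤ (s : ℝ) * 2 := by
      have := sq_sum_le_card_mul_sum_sq (s := Finset.univ) (f := fun j => |z' j|)
      simp only [Finset.card_univ, Fintype.card_fin, sq_abs] at this
      calc (∑ j, |z' j|) ^ 2 ≤ (s : ℝ) * ∑ j, z' j ^ 2 := by exact_mod_cast this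
        _ ≤ (s : ℝ) * 2 := by
            have : (0:ℝ) ≤ (s:ℝ) := Nat.cast_nonneg s
            nlinarith
    have h2 : (0:ℝ) ≤ ∑ j, |z' j| := Finset.sum_nonneg fun j _ => abs_nonneg _
    have h3 : Real.sqrt 2 * Real.sqrt s = Real.sqrt ((s:ℝ) * 2) := by
      rw [← Real.sqrt_mul (by norm_num : (0:ℝ) ≤ 2), mul_comm]
    rw [h3]
    nlinarith [Real.sq_sqrt (by positivity : (0:ℝ) ≤ (s:ℝ) * 2),
      Real.sqrt_nonneg ((s:ℝ) * 2)]
  -- column norms of Bt - B are ≤ eps  (when s > 0)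
  have hcol : ∀ j : Fin s, ‖toE fun i => (Bt - B) i j‖ ≤ eps := by
    intro j
    have hset : {c | ∃ j, c = ‖toE fun i => (Bt - B) i j‖} =
        Set.range fun j => ‖toE fun i => (Bt - B) i j‖ := by
      ext a; simp [Set.range, eq_comm]
    have hbdd : BddAbove {c | ∃ j, c = ‖toE fun i => (Bt - B) i j‖} := by
      rw [hset]; exact (Set.finite_range _).bddAbove
    exact le_trans (le_csSup hbdd ⟨j, rfl⟩) hN
  -- the witness vector
  set w : Fin s → ℝ := fun j => c * z' j with hwdef
  set v : Fin (s + 1 + 1) → ℝ := Fin.snoc (Fin.snoc w c) (-c) with hvdef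
  -- norm of v is ≥ 1
  have hv1 : 1 ≤ ‖toE v‖ := by
    have hsum : ∑ j, v j ^ 2 = (∑ j, w j ^ 2) + c ^ 2 + c ^ 2 := by
      rw [hvdef, Fin.sum_univ_castSucc]
      simp only [Fin.snoc_castSucc, Fin.snoc_last, neg_sq]
      rw [Fin.sum_univ_castSucc]
      simp only [Fin.snoc_castSucc, Fin.snoc_last]
      try ring
    have h1 : (1:ℝ) ≤ ∑ j, v j ^ 2 := by
      rw [hsum, hc2]
      have : (0:ℝ) ≤ ∑ j, w j ^ 2 := Finset.sum_nonneg fun j _ => sq_nonneg _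
      linarith
    have : ‖toE v‖ = Real.sqrt (∑ j, v j ^ 2) := by
      rw [EuclideanSpace.norm_eq]
      congr 1
      exact Finset.sum_congr rfl fun j _ => by simp [toE, Real.norm_eq_abs, sq_abs]
    rw [this]
    nlinarith [Real.sq_sqrt (le_trans zero_le_one h1), Real.sqrt_nonneg (∑ j, v j ^ 2)]
  -- key algebraic identities
  have hWv : ∀ (A : Matrix (Fin m) (Fin s) ℝ),
      (appendCol (appendCol A x) y).mulVec v =
        fun i => A.mulVec w i + c * x i + (-c) * y i := by
    intro A
    rw [hvdef, mulVec_appendCol, ]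
    funext i
    rw [mulVec_appendCol]
  have key2 : toE ((appendCol (appendCol Bt x) y).mulVec v) =
      c • (resid f Bt x - resid f Bt y) := by
    ext i
    have hmv : Bt.mulVec w i = c * (Bt.mulVec zy i - Bt.mulVec zx i) := by
      have : w = c • (zy - zx) := by funext j; simp [hwdef, hz'def]
      rw [this, Matrix.mulVec_smul, Matrix.mulVec_sub]
      simp
    show (appendCol (appendCol Bt x) y).mulVec v i = _
    rw [hWv Bt]
    simp only [PiLp.smul_apply, PiLp.sub_apply, smul_eq_mul]
    rw [hmv]
    show c * (Bt.mulVec zy i - Bt.mulVec zx i) + c * x i + -c * y i =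
      c * ((x - toE (Bt.mulVec zx)) i - (y - toE (Bt.mulVec zy)) i)
    simp only [PiLp.sub_apply]
    show _ = c * ((x i - Bt.mulVec zx i) - (y i - Bt.mulVec zy i))
    ring
  have key1 : toE ((appendCol (appendCol B x) y).mulVec v) =
      toE ((appendCol (appendCol Bt x) y).mulVec v) + toE ((B - Bt).mulVec w) := by
    ext i
    show (appendCol (appendCol B x) y).mulVec v i = _
    have : (toE ((appendCol (appendCol Bt x) y).mulVec v) + toE ((B - Bt).mulVec w)) i =
        (appendCol (appendCol Bt x) y).mulVec v i + (B - Bt).mulVec w i := rfl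
    rw [this, hWv B, hWv Bt, Matrix.sub_mulVec]
    simp only [Pi.sub_apply]
    ring
  -- bound on perturbation
  have hd : ‖toE ((B - Bt).mulVec w)‖ ≤ Real.sqrt s * eps := by
    rcases Nat.eq_zero_or_pos s with hs | hs
    · subst hs
      have : (B - Bt).mulVec w = 0 := by
        funext i; simp [Matrix.mulVec, dotProduct]
      rw [this]
      simp [toE]
    · have heps : 0 ≤ eps := by
        have j0 : Fin s := ⟨0, hs⟩
        exact le_trans (norm_nonneg _) (hcol j0)
      calc ‖toE ((B - Bt).mulVec w)‖ ≤ ∑ j, |w j| * ‖toE fun i => (B - Bt) i j‖ :=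
            norm_toE_mulVec_le _ _
        _ ≤ ∑ j, |w j| * eps := by
            refine Finset.sum_le_sum fun j _ => ?_
            refine mul_le_mul_of_nonneg_left ?_ (abs_nonneg _)
            have : (fun i => (B - Bt) i j) = fun i => -((Bt - B) i j) := by
              funext i; simp [Matrix.sub_apply]
            rw [this]
            have hneg : (toE fun i => -((Bt - B) i j)) = -(toE fun i => (Bt - B) i j) := rfl
            rw [hneg, norm_neg]
            exact hcol j
        _ = (∑ j, |w j|) * eps := by rw [Finset.sum_mul]
        _ ≤ (c * (Real.sqrt 2 * Real.sqrt s)) * eps := by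
            refine mul_le_mul_of_nonneg_right ?_ heps
            have : ∑ j, |w j| = c * ∑ j, |z' j| := by
              rw [Finset.mul_sum]
              refine Finset.sum_congr rfl fun j _ => ?_
              rw [hwdef, abs_mul, abs_of_pos hcpos]
            rw [this]
            exact mul_le_mul_of_nonneg_left hl1 hcpos.le
        _ = Real.sqrt s * eps := by
            rw [hcdef]
            field_simp
  -- norm of the Bt-version
  have hnt : ‖toE ((appendCol (appendCol Bt x) y).mulVec v)‖ = c * D := by
    rw [key2, norm_smul, Real.norm_eq_abs, abs_of_pos hcpos]
  -- main bound on smin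
  have hmain : smin (appendCol (appendCol B x) y) ≤ Real.sqrt s * eps + c * D := by
    rw [smin]
    by_cases hm : s + 1 + 1 ≤ m
    · rw [if_pos hm]
      have hb : BddBelow {c | ∃ z : Fin (s+1+1) → ℝ, 1 ≤ ‖toE z‖ ∧
          c = ‖toE ((appendCol (appendCol B x) y).mulVec z)‖} := by
        refine ⟨0, ?_⟩
        rintro a ⟨z, hz, rfl⟩
        exact norm_nonneg _
      have hmem : ‖toE ((appendCol (appendCol B x) y).mulVec v)‖ ∈
          {c | ∃ z : Fin (s+1+1) → ℝ, 1 ≤ ‖toE z‖ ∧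
            c = ‖toE ((appendCol (appendCol B x) y).mulVec z)‖} := ⟨v, hv1, rfl⟩
      refine le_trans (csInf_le hb hmem) ?_
      calc ‖toE ((appendCol (appendCol B x) y).mulVec v)‖
          ≤ ‖toE ((appendCol (appendCol Bt x) y).mulVec v)‖ + ‖toE ((B - Bt).mulVec w)‖ := by
            rw [key1]; exact norm_add_le _ _
        _ ≤ c * D + Real.sqrt s * eps := by rw [hnt]; linarith
        _ = Real.sqrt s * eps + c * D := by ring
    · rw [if_neg hm]
      have : 0 ≤ Real.sqrt s * eps := by
        rcases Nat.eq_zero_or_pos s with hs | hs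
        · subst hs; simp
        · have heps : 0 ≤ eps := by
            have j0 : Fin s := ⟨0, hs⟩
            exact le_trans (norm_nonneg _) (hcol j0)
          positivity
      nlinarith
  -- conclude
  have hinv : Real.sqrt 2 * c = 1 := mul_inv_cancel₀ hs2.ne'
  nlinarith [mul_le_mul_of_nonneg_left hmain hs2.le]
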